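/- For every integer n ≥ 1, in the dominance order: 2x·H_n(x) + I_n(x) ≼ G_{n+1}(x) and F_n(x) + 2·G_n(x) ≼ H_{n+1}(x); moreover x·F_n(x) + G_n(x) = I_{n+1}(x) as polynomials. -/

import Mathlib

open Polynomial in
/-- The tail sum Σ_{k ≥ N} of the coefficients of a polynomial over ℕ. -/
def tailSum (f : Polynomial ℕ) (N : ℕ) : ℕ :=
  ∑ k ∈ f.support.filter (fun k => N ≤ k), f.coeff k

/-- The dominance order on polynomials over ℕ: `domRel f g` means f ≽ g,
    i.e. every tail sum of coefficients of f is at least that of g. -/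
def domRel (f g : Polynomial ℕ) : Prop :=
  ∀ N : ℕ, tailSum g N ≤ tailSum f N

open Polynomial

/-- F_n(x) = Σ_{i=0}^{n} C(2n−i, i)·x^{n−i}. -/
noncomputable def Fpoly (n : ℕ) : Polynomial ℕ :=
  ∑ i ∈ Finset.range (n + 1), C ((2 * n - i).choose i) * X ^ (n - i)

/-- G_n(x) = Σ_{i=0}^{n} C(2n+1−i, i)·x^{n+1−i}. -/
noncomputable def Gpoly (n : ℕ) : Polynomial ℕ :=
  ∑ i ∈ Finset.range (n + 1), C ((2 * n + 1 - i).choose i) * X ^ (n + 1 - i)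

/-- H_n(x) = Σ_{i=0}^{n} (C(2n−i, i) + C(2n−1−i, i))·x^{n−i}. -/
noncomputable def Hpoly (n : ℕ) : Polynomial ℕ :=
  ∑ i ∈ Finset.range (n + 1), C ((2 * n - i).choose i + (2 * n - 1 - i).choose i) * X ^ (n - i)

/-- I_n(x) = Σ_{i=0}^{n−1} (C(2n−1−i, i) + C(2n−2−i, i))·x^{n−i}. -/
noncomputable def Ipoly (n : ℕ) : Polynomial ℕ :=
  ∑ i ∈ Finset.range n, C ((2 * n - 1 - i).choose i + (2 * n - 2 - i).choose i) * X ^ (n - i)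

/-! ### Auxiliary lemmas -/

lemma coeff_sum_pow (n : ℕ) (c : ℕ → ℕ) (k : ℕ) :
    (∑ i ∈ Finset.range (n + 1), C (c i) * X ^ (n - i)).coeff k
      = if k ≤ n then c (n - k) else 0 := by
  rw [Polynomial.finset_sum_coeff]
  simp only [Polynomial.coeff_C_mul, Polynomial.coeff_X_pow, mul_ite, mul_one, mul_zero]
  split
  · next h =>
    rw [Finset.sum_eq_single (n - k)]
    · rw [if_pos (by omega)]
    · intro i hi hne
      rw [if_neg]
      simp only [Finset.mem_range] at hi
      omega
    · intro h'
      exact absurd (Finset.mem_range.mpr (by omega)) h'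
  · next h =>
    apply Finset.sum_eq_zero
    intro i hi
    rw [if_neg]
    omega

lemma coeff_sum_pow' (n : ℕ) (c : ℕ → ℕ) (k : ℕ) :
    (∑ i ∈ Finset.range n, C (c i) * X ^ (n - i)).coeff k
      = if 1 ≤ k ∧ k ≤ n then c (n - k) else 0 := by
  rw [Polynomial.finset_sum_coeff]
  simp only [Polynomial.coeff_C_mul, Polynomial.coeff_X_pow, mul_ite, mul_one, mul_zero]
  split
  · next h =>
    rw [Finset.sum_eq_single (n - k)]
    · rw [if_pos (by omega)]
    · intro i hi hne
      rw [if_neg]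
      simp only [Finset.mem_range] at hi
      omega
    · intro h'
      exact absurd (Finset.mem_range.mpr (by omega)) h'
  · next h =>
    apply Finset.sum_eq_zero
    intro i hi
    simp only [Finset.mem_range] at hi
    rw [if_neg]
    omega

lemma coeff_F (n k : ℕ) :
    (Fpoly n).coeff k = if k ≤ n then (n + k).choose (n - k) else 0 := by
  rw [Fpoly, coeff_sum_pow]
  split
  · next h => congr 1; omega
  · rfl

lemma coeff_G (n k : ℕ) :
    (Gpoly n).coeff k = if 1 ≤ k ∧ k ≤ n + 1 then (n + k).choose (n + 1 - k) else 0 := by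
  have : Gpoly n = ∑ i ∈ Finset.range (n + 1), C ((2 * n + 1 - i).choose i) * X ^ (n + 1 - i) := rfl
  rw [this, coeff_sum_pow' (n + 1) (fun i => (2 * n + 1 - i).choose i) k]
  split
  · next h => congr 1 <;> omega
  · rfl

lemma coeff_H (n k : ℕ) :
    (Hpoly n).coeff k
      = if k ≤ n then (n + k).choose (n - k) + (n + k - 1).choose (n - k) else 0 := by
  rw [Hpoly, coeff_sum_pow]
  split
  · next h => congr 2 <;> omega
  · rfl

lemma coeff_I (n k : ℕ) :
    (Ipoly n).coeff k
      = if 1 ≤ k ∧ k ≤ n then (n + k - 1).choose (n - k) + (n + k - 2).choose (n - k) else 0 := by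
  rw [Ipoly, coeff_sum_pow' n (fun i => (2 * n - 1 - i).choose i + (2 * n - 2 - i).choose i) k]
  split
  · next h => congr 2 <;> omega
  · rfl

lemma coeff_X_mul' (f : Polynomial ℕ) (k : ℕ) :
    (X * f).coeff k = if k = 0 then 0 else f.coeff (k - 1) := by
  cases k with
  | zero => simp [Polynomial.mul_coeff_zero]
  | succ m => rw [Polynomial.coeff_X_mul]; simp

lemma coeff_XF (n k : ℕ) :
    (X * Fpoly n).coeff k
      = if 1 ≤ k ∧ k ≤ n + 1 then (n + k - 1).choose (n + 1 - k) else 0 := by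
  rw [coeff_X_mul', coeff_F]
  split
  · next h => rw [if_neg]; omega
  · next h =>
    split
    · next h2 => rw [if_pos (by omega)]; congr 1 <;> omega
    · next h2 => rw [if_neg (by omega)]

lemma coeff_XXF (n k : ℕ) :
    (X * (X * Fpoly n)).coeff k
      = if 2 ≤ k ∧ k ≤ n + 2 then (n + k - 2).choose (n + 2 - k) else 0 := by
  rw [coeff_X_mul', coeff_XF]
  split
  · next h => rw [if_neg]; omega
  · next h =>
    split
    · next h2 => rw [if_pos (by omega)]; congr 1 <;> omega
    · next h2 => rw [if_neg (by omega)]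

lemma coeff_XH (n k : ℕ) :
    (X * Hpoly n).coeff k
      = if 1 ≤ k ∧ k ≤ n + 1 then
          (n + k - 1).choose (n + 1 - k) + (n + k - 2).choose (n + 1 - k) else 0 := by
  rw [coeff_X_mul', coeff_H]
  split
  · next h => rw [if_neg]; omega
  · next h =>
    split
    · next h2 => rw [if_pos (by omega)]; congr 2 <;> omega
    · next h2 => rw [if_neg (by omega)]

lemma pascal3 (m j : ℕ) :
    (m + 3).choose (j + 2)
      = (m + 1).choose (j + 1) + 2 * m.choose (j + 1) + (m + 1).choose j
        + m.choose j + m.choose (j + 2) := by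
  have h1 : (m + 3).choose (j + 2) = (m + 2).choose (j + 1) + (m + 2).choose (j + 2) :=
    Nat.choose_succ_succ' (m + 2) (j + 1) ▸ rfl
  have h2 : (m + 2).choose (j + 1) = (m + 1).choose j + (m + 1).choose (j + 1) :=
    Nat.choose_succ_succ (m + 1) j
  have h3 : (m + 2).choose (j + 2) = (m + 1).choose (j + 1) + (m + 1).choose (j + 2) :=
    Nat.choose_succ_succ (m + 1) (j + 1)
  have h4 : (m + 1).choose (j + 1) = m.choose j + m.choose (j + 1) :=
    Nat.choose_succ_succ m j
  have h5 : (m + 1).choose (j + 2) = m.choose (j + 1) + m.choose (j + 2) :=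
    Nat.choose_succ_succ m (j + 1)
  omega

/-- Identity 3: X·F_n + G_n = I_{n+1}. -/
lemma identity3 (n : ℕ) : X * Fpoly n + Gpoly n = Ipoly (n + 1) := by
  ext k
  rw [Polynomial.coeff_add, coeff_XF, coeff_G, coeff_I]
  have e1 : n + 1 + k - 1 = n + k := by omega
  have e2 : n + 1 + k - 2 = n + k - 1 := by omega
  rw [e1, e2]
  split_ifs <;> omega

/-- Identity 2: H_{n+1} = F_n + 2·G_n. -/
lemma identity2 (n : ℕ) : Hpoly (n + 1) = Fpoly n + C 2 * Gpoly n := by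
  ext k
  rw [Polynomial.coeff_add, Polynomial.coeff_C_mul, coeff_H, coeff_F, coeff_G]
  have e3 : n + 1 + k - 1 = n + k := by omega
  rw [e3]
  split_ifs with h1 h2 h3 h3 <;> try omega
  · -- 1 ≤ k ≤ n : Pascal
    have e1 : n + 1 + k = (n + k) + 1 := by omega
    have e2 : n + 1 - k = (n - k) + 1 := by omega
    rw [e1, e2]
    have hp : ((n + k) + 1).choose ((n - k) + 1)
        = (n + k).choose (n - k) + (n + k).choose ((n - k) + 1) :=
      Nat.choose_succ_succ (n + k) (n - k)
    omega
  · -- k = 0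
    have hk : k = 0 := by omega
    subst hk
    simp [Nat.choose_self, Nat.choose_eq_zero_of_lt]
  · -- k = n + 1
    have hk : k = n + 1 := by omega
    subst hk
    have e1 : n + 1 + (n + 1) = 2 * n + 2 := by omega
    have e2 : n + 1 - (n + 1) = 0 := by omega
    have e4 : n + (n + 1) = 2 * n + 1 := by omega
    rw [e1, e2, e4, Nat.choose_zero_right, Nat.choose_zero_right]
    omega

/-- Identity 1: G_{n+1} + X·F_n = 2X·H_n + I_n + X·(X·F_n), for n ≥ 1. -/
lemma identity1 (n : ℕ) (hn : 1 ≤ n) :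
    Gpoly (n + 1) + X * Fpoly n
      = (C 2 * X * Hpoly n + Ipoly n) + X * (X * Fpoly n) := by
  ext k
  have hC2 : (C 2 * X * Hpoly n : Polynomial ℕ) = C 2 * (X * Hpoly n) := by ring
  rw [Polynomial.coeff_add, Polynomial.coeff_add, Polynomial.coeff_add, hC2,
    Polynomial.coeff_C_mul, coeff_G, coeff_XF, coeff_XH, coeff_I, coeff_XXF]
  have eG : n + 1 + 1 - k = n + 2 - k := by omega
  rw [eG]
  by_cases hk0 : k = 0
  · subst hk0
    rw [if_neg (by omega), if_neg (by omega), if_neg (by omega), if_neg (by omega),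
      if_neg (by omega)]
    omega
  by_cases hbig : n + 2 < k
  · rw [if_neg (by omega), if_neg (by omega), if_neg (by omega), if_neg (by omega),
      if_neg (by omega)]
    omega
  by_cases hk1 : k = 1
  · subst hk1
    rw [if_pos (by omega), if_pos (by omega), if_pos (by omega), if_pos (by omega),
      if_neg (by omega)]
    have e1 : n + 1 + 1 = n + 2 := by omega
    have e2 : n + 2 - 1 = n + 1 := by omega
    have e3 : n + 1 - 1 = n := by omega
    have e4 : n + 1 - 2 = n - 1 := by omega
    rw [e1, e2, e3, e4]
    have c1 : (n + 2).choose (n + 1) = n + 2 := Nat.choose_succ_self_right (n + 1)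
    have c2 : n.choose n = 1 := Nat.choose_self n
    have c3 : (n - 1).choose n = 0 := Nat.choose_eq_zero_of_lt (by omega)
    have c4 : n.choose (n - 1) = n := by
      have h1 : 1 ≤ n := hn
      have := Nat.choose_symm h1
      rw [this, Nat.choose_one_right]
    have c5 : (n - 1).choose (n - 1) = 1 := Nat.choose_self (n - 1)
    omega
  by_cases hkn : k ≤ n
  · -- 2 ≤ k ≤ n : triple Pascal
    rw [if_pos (by omega), if_pos (by omega), if_pos (by omega), if_pos (by omega),
      if_pos (by omega)]
    have e1 : n + 1 + k = (n + k - 2) + 3 := by omega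
    have e2 : n + 2 - k = (n - k) + 2 := by omega
    have e3 : n + k - 1 = (n + k - 2) + 1 := by omega
    have e4 : n + 1 - k = (n - k) + 1 := by omega
    rw [e1, e2, e3, e4]
    have hp := pascal3 (n + k - 2) (n - k)
    omega
  by_cases hkn1 : k = n + 1
  · subst hkn1
    rw [if_pos (by omega), if_pos (by omega), if_pos (by omega), if_neg (by omega),
      if_pos (by omega)]
    have e1 : n + 1 + (n + 1) = 2 * n + 2 := by omega
    have e2 : n + 2 - (n + 1) = 1 := by omega
    have e3 : n + (n + 1) - 1 = 2 * n := by omega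
    have e4 : n + 1 - (n + 1) = 0 := by omega
    have e5 : n + (n + 1) - 2 = 2 * n - 1 := by omega
    rw [e1, e2, e3, e4, e5]
    have c1 : (2 * n + 2).choose 1 = 2 * n + 2 := Nat.choose_one_right _
    have c2 : (2 * n).choose 0 = 1 := Nat.choose_zero_right _
    have c3 : (2 * n - 1).choose 0 = 1 := Nat.choose_zero_right _
    have c4 : (2 * n - 1).choose 1 = 2 * n - 1 := Nat.choose_one_right _
    omega
  · -- k = n + 2
    have hk : k = n + 2 := by omega
    subst hk
    rw [if_pos (by omega), if_neg (by omega), if_neg (by omega), if_neg (by omega),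
      if_pos (by omega)]
    have e1 : n + 2 - (n + 2) = 0 := by omega
    rw [e1, Nat.choose_zero_right, Nat.choose_zero_right]
    omega

/-! ### tailSum lemmas -/

lemma tailSum_eq_range (f : Polynomial ℕ) (N M : ℕ) (hM : f.natDegree < M) :
    tailSum f N = ∑ k ∈ (Finset.range M).filter (fun k => N ≤ k), f.coeff k := by
  rw [tailSum]
  apply Finset.sum_subset
  · intro k hk
    simp only [Finset.mem_filter, Finset.mem_range] at *
    exact ⟨lt_of_le_of_lt (Polynomial.le_natDegree_of_mem_supp k hk.1) hM, hk.2⟩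
  · intro k hk hk2
    simp only [Finset.mem_filter, Finset.mem_range] at *
    by_contra h
    exact hk2 ⟨Polynomial.mem_support_iff.mpr h, hk.2⟩

lemma tailSum_add (f g : Polynomial ℕ) (N : ℕ) :
    tailSum (f + g) N = tailSum f N + tailSum g N := by
  set M := max (f + g).natDegree (max f.natDegree g.natDegree) + 1 with hM
  rw [tailSum_eq_range (f + g) N M (by omega), tailSum_eq_range f N M (by omega),
    tailSum_eq_range g N M (by omega), ← Finset.sum_add_distrib]
  exact Finset.sum_congr rfl fun k _ => Polynomial.coeff_add f g k

lemma tailSum_X_mul_le (h : Polynomial ℕ) (N : ℕ) :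
    tailSum h N ≤ tailSum (X * h) N := by
  have hd : (X * h).natDegree < h.natDegree + 2 :=
    lt_of_le_of_lt (Polynomial.natDegree_mul_le) (by simp; omega)
  rw [tailSum_eq_range h N (h.natDegree + 2) (by omega),
    tailSum_eq_range (X * h) N (h.natDegree + 3) (by omega)]
  have : ∑ k ∈ (Finset.range (h.natDegree + 2)).filter (fun k => N ≤ k), h.coeff k
      = ∑ k ∈ ((Finset.range (h.natDegree + 2)).filter (fun k => N ≤ k)).image (· + 1),
          (X * h).coeff k := by
    rw [Finset.sum_image (by intro a _ b _ hab; simp only at hab; omega)]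
    exact Finset.sum_congr rfl fun k _ => (Polynomial.coeff_X_mul h k).symm
  rw [this]
  apply Finset.sum_le_sum_of_subset
  intro k hk
  simp only [Finset.mem_image, Finset.mem_filter, Finset.mem_range] at *
  obtain ⟨a, ⟨ha1, ha2⟩, rfl⟩ := hk
  exact ⟨by omega, by omega⟩

lemma domRel_of_shift (f g h : Polynomial ℕ) (hid : f + h = g + X * h) : domRel f g := by
  intro N
  have := congrArg (fun p => tailSum p N) hid
  simp only [tailSum_add] at this
  have h2 := tailSum_X_mul_le h N
  omega

theorem stmt14 (n : ℕ) (hn : 1 ≤ n) :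
    domRel (Gpoly (n + 1)) (C 2 * X * Hpoly n + Ipoly n) ∧
    domRel (Hpoly (n + 1)) (Fpoly n + C 2 * Gpoly n) ∧
    X * Fpoly n + Gpoly n = Ipoly (n + 1) := by
  refine ⟨?_, ?_, identity3 n⟩
  · exact domRel_of_shift _ _ (X * Fpoly n) (identity1 n hn)
  · rw [identity2 n]
    intro N; exact le_refl _
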